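/- Every finitely generated free group is residually finite: for any finite subset S of a free group F of finite rank not containing the identity, there exists a finite group K and a group homomorphism φ : F → K such that φ(s) ≠ 1 for all s ∈ S. -/

import Mathlib

namespace RFAux

variable {k : ℕ}

/-- No-adjacent-cancellation property of a word. -/
def NoAdj (L : List (Fin k × Bool)) : Prop :=
  ∀ (j : ℕ) (a : Fin k) (b : Bool),
    L[j]? = some (a, b) → L[j + 1]? = some (a, !b) → False

lemma toWord_noAdj (w : FreeGroup (Fin k)) : NoAdj w.toWord := by
  intro j a b h1 h2
  have hj : j < w.toWord.length := (List.getElem?_eq_some_iff.mp h1).1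
  have hj1 : j + 1 < w.toWord.length := (List.getElem?_eq_some_iff.mp h2).1
  have hdecomp : w.toWord = w.toWord.take j ++ (a, b) :: (a, !b) :: w.toWord.drop (j + 2) := by
    conv_lhs => rw [← List.take_append_drop j w.toWord]
    congr 1
    rw [List.drop_eq_getElem_cons hj, List.drop_eq_getElem_cons hj1]
    have e1 : w.toWord[j] = (a, b) := by
      have := (List.getElem?_eq_some_iff.mp h1).2; simpa using this
    have e2 : w.toWord[j + 1] = (a, !b) := by
      have := (List.getElem?_eq_some_iff.mp h2).2; simpa using this
    rw [e1, e2]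
  exact FreeGroup.reduce.not (L₂ := w.toWord.take j) (L₃ := w.toWord.drop (j + 2))
    (by rw [FreeGroup.reduce_toWord]; exact hdecomp)

variable (L : List (Fin k × Bool)) (i : Fin k)

/-- Positions that move down (or up) under the generator `i`. -/
def D (m : Fin (L.length + 1)) : Prop :=
  ((m : ℕ) ≠ 0 ∧ L[(m : ℕ) - 1]? = some (i, true)) ∨ L[(m : ℕ)]? = some (i, false)

def R (m : Fin (L.length + 1)) : Prop :=
  L[(m : ℕ)]? = some (i, true) ∨ ((m : ℕ) ≠ 0 ∧ L[(m : ℕ) - 1]? = some (i, false))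

instance : DecidablePred (D L i) := fun m => by unfold D; infer_instance
instance : DecidablePred (R L i) := fun m => by unfold R; infer_instance

/-- The partial shift map for generator `i`. -/
def g (m : Fin (L.length + 1)) : Fin (L.length + 1) :=
  if (m : ℕ) ≠ 0 ∧ L[(m : ℕ) - 1]? = some (i, true) then
    ⟨(m : ℕ) - 1, by have := m.isLt; omega⟩
  else if h : L[(m : ℕ)]? = some (i, false) then
    ⟨(m : ℕ) + 1, by have := (List.getElem?_eq_some_iff.mp h).1; omega⟩
  else m

lemma g_mem {m : Fin (L.length + 1)} (hm : D L i m) : R L i (g L i m) := by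
  unfold g
  split_ifs with h1 h2
  · exact Or.inl (by simpa using h1.2)
  · exact Or.inr ⟨by simp, by simpa using h2⟩
  · rcases hm with h | h
    · exact absurd h h1
    · exact absurd h h2

lemma g_cases {m : Fin (L.length + 1)} (hm : D L i m) :
    ((m : ℕ) ≠ 0 ∧ L[(m : ℕ) - 1]? = some (i, true) ∧ (g L i m : ℕ) = (m : ℕ) - 1) ∨
    (L[(m : ℕ)]? = some (i, false) ∧ (g L i m : ℕ) = (m : ℕ) + 1) := by
  unfold g
  split_ifs with h1 h2
  · exact Or.inl ⟨h1.1, h1.2, rfl⟩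
  · exact Or.inr ⟨h2, rfl⟩
  · rcases hm with h | h
    · exact absurd h h1
    · exact absurd h h2

lemma g_inj (hred : NoAdj L) : ∀ m1 m2 : Fin (L.length + 1), D L i m1 → D L i m2 →
    g L i m1 = g L i m2 → m1 = m2 := by
  intro m1 m2 hm1 hm2 heq
  have hv : (g L i m1 : ℕ) = (g L i m2 : ℕ) := congrArg Fin.val heq
  rcases g_cases L i hm1 with ⟨h10, h1t, h1v⟩ | ⟨h1f, h1v⟩ <;>
    rcases g_cases L i hm2 with ⟨h20, h2t, h2v⟩ | ⟨h2f, h2v⟩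
  · exact Fin.ext (by omega)
  · rw [show (m1 : ℕ) - 1 = (m2 : ℕ) + 1 by omega] at h1t
    exact absurd h1t fun h => hred (m2 : ℕ) i false h2f (by simpa using h)
  · rw [show (m2 : ℕ) - 1 = (m1 : ℕ) + 1 by omega] at h2t
    exact absurd h2t fun h => hred (m1 : ℕ) i false h1f (by simpa using h)
  · exact Fin.ext (by omega)

lemma g_surj (hred : NoAdj L) : ∀ r : Fin (L.length + 1), R L i r →
    ∃ m : Fin (L.length + 1), D L i m ∧ g L i m = r := by
  intro r hr
  rcases hr with h | h
  · have hlt : (r : ℕ) < L.length := (List.getElem?_eq_some_iff.mp h).1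
    refine ⟨⟨(r : ℕ) + 1, by omega⟩, Or.inl ⟨by simp, by simpa using h⟩, ?_⟩
    unfold g
    rw [if_pos ⟨by simp, by simpa using h⟩]
    exact Fin.ext (by simp)
  · obtain ⟨hr0, h⟩ := h
    have hlt : (r : ℕ) - 1 < L.length := (List.getElem?_eq_some_iff.mp h).1
    refine ⟨⟨(r : ℕ) - 1, by omega⟩, Or.inr (by simpa using h), ?_⟩
    unfold g
    rw [if_neg, dif_pos (by simpa using h)]
    · exact Fin.ext (by simp; omega)
    · rintro ⟨h0, htop⟩
      simp only at h0 htop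
      exact hred ((r : ℕ) - 1 - 1) i true htop
        (by rw [show (r:ℕ)-1-1+1 = (r:ℕ)-1 by omega]; exact h)

/-- The restriction of `g` as an equivalence between the subtypes. -/
noncomputable def gEquiv (hred : NoAdj L) : {m : Fin (L.length + 1) // D L i m} ≃
    {m : Fin (L.length + 1) // R L i m} :=
  Equiv.ofBijective (fun x => ⟨g L i x.1, g_mem L i x.2⟩)
    ⟨fun x y h => Subtype.ext (g_inj L i hred x.1 y.1 x.2 y.2 (by simpa using h)),
     fun r => by
      obtain ⟨m, hm, hgm⟩ := g_surj L i hred r.1 r.2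
      exact ⟨⟨m, hm⟩, Subtype.ext hgm⟩⟩

/-- The permutation of `Fin (L.length + 1)` attached to the generator `i`. -/
noncomputable def sigma (hred : NoAdj L) : Equiv.Perm (Fin (L.length + 1)) :=
  (Equiv.sumCompl (D L i)).symm.trans
    (((gEquiv L i hred).sumCongr
      (Fintype.equivOfCardEq (by
        rw [Fintype.card_subtype_compl, Fintype.card_subtype_compl,
          Fintype.card_congr (gEquiv L i hred)]))).trans
    (Equiv.sumCompl (R L i)))

lemma sigma_apply_of_D (hred : NoAdj L) {m : Fin (L.length + 1)} (hm : D L i m) :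
    sigma L i hred m = g L i m := by
  unfold sigma
  simp only [Equiv.trans_apply, Equiv.sumCompl_symm_apply_of_pos hm,
    Equiv.sumCongr_apply, Sum.map_inl, Equiv.sumCompl_apply_inl]
  rfl

lemma sigma_tt (hred : NoAdj L) {j : ℕ} (hj : j < L.length) (h : L[j]? = some (i, true)) :
    sigma L i hred ⟨j + 1, by omega⟩ = ⟨j, by omega⟩ := by
  have hD : D L i ⟨j + 1, by omega⟩ := Or.inl ⟨by simp, by simpa using h⟩
  rw [sigma_apply_of_D L i hred hD]
  unfold g
  rw [if_pos ⟨by simp, by simpa using h⟩]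
  exact Fin.ext (by simp)

lemma sigma_ff (hred : NoAdj L) {j : ℕ} (hj : j < L.length) (h : L[j]? = some (i, false)) :
    sigma L i hred ⟨j, by omega⟩ = ⟨j + 1, by omega⟩ := by
  have hD : D L i ⟨j, by omega⟩ := Or.inr (by simpa using h)
  rw [sigma_apply_of_D L i hred hD]
  unfold g
  rw [if_neg, dif_pos (by simpa using h)]
  · rintro ⟨h0, htop⟩
    simp only at h0 htop
    exact hred (j - 1) i true htop (by rw [show j-1+1 = j by omega]; exact h)

set_option maxHeartbeats 1000000 in
/-- Main computation: applying the image of the word to the last position gives `0`. -/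
lemma prod_apply (hred : NoAdj L) :
    ∀ (M P : List (Fin k × Bool)) (hPM : P ++ M = L),
    (M.map fun x => cond x.2 (sigma L x.1 hred) (sigma L x.1 hred)⁻¹).prod
      ⟨P.length + M.length, by subst hPM; simp only [List.length_append]; omega⟩ =
      ⟨P.length, by subst hPM; simp only [List.length_append]; omega⟩ := by
  intro M
  induction M with
  | nil => intro P hPM; simp
  | cons x M' ih =>
    intro P hPM
    obtain ⟨a, b⟩ := x
    have hPM' : (P ++ [(a, b)]) ++ M' = L := by simpa using hPM
    have hstep := ih (P ++ [(a, b)]) hPM'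
    have hpos : (⟨P.length + ((a, b) :: M').length,
          (by subst hPM; simp only [List.length_append, List.length_cons]; omega)⟩ :
          Fin (L.length + 1)) =
        ⟨(P ++ [(a, b)]).length + M'.length,
          (by subst hPM'; simp only [List.length_append, List.length_cons, List.length_nil]; omega)⟩ := by
      simp only [Fin.mk.injEq, List.length_append, List.length_cons, List.length_nil]; omega
    have hgetP : L[P.length]? = some (a, b) := by
      rw [← hPM, List.getElem?_append_right (le_refl P.length)]
      simp
    have hltP : P.length < L.length := (List.getElem?_eq_some_iff.mp hgetP).1
    simp only [List.map_cons, List.prod_cons, Equiv.Perm.mul_apply, hpos, hstep]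
    have hP1 : (⟨(P ++ [(a, b)]).length,
          (by subst hPM'; simp only [List.length_append, List.length_cons, List.length_nil]; omega)⟩ : Fin (L.length + 1)) =
        ⟨P.length + 1, by omega⟩ := by
      simp only [Fin.mk.injEq, List.length_append, List.length_cons, List.length_nil]
    rw [hP1]
    cases b with
    | true =>
      simpa using sigma_tt L a hred hltP hgetP
    | false =>
      simp only [cond_false]
      rw [Equiv.Perm.inv_def, Equiv.symm_apply_eq]
      exact (sigma_ff L a hred hltP hgetP).symm

/-- Single-element residual finiteness for free groups. -/
lemma single (w : FreeGroup (Fin k)) (hw : w ≠ 1) :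
    ∃ (K : Type) (_ : Group K) (_ : Finite K) (φ : FreeGroup (Fin k) →* K), φ w ≠ 1 := by
  classical
  set L := w.toWord with hL
  have hred : NoAdj L := toWord_noAdj w
  refine ⟨Equiv.Perm (Fin (L.length + 1)), inferInstance, inferInstance,
    FreeGroup.lift (fun a => sigma L a hred), ?_⟩
  intro hcon
  have hlen : L.length ≠ 0 := by
    simp only [hL, ne_eq, List.length_eq_zero_iff, FreeGroup.toWord_eq_nil_iff]
    exact hw
  have hval : FreeGroup.lift (fun a => sigma L a hred) w =
      (L.map fun x => cond x.2 (sigma L x.1 hred) (sigma L x.1 hred)⁻¹).prod := by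
    conv_lhs => rw [← FreeGroup.mk_toWord (x := w)]
    rw [FreeGroup.lift_mk]
  have hmain := prod_apply L hred L [] (by simp)
  rw [← hval, hcon] at hmain
  simp only [List.length_nil, Nat.zero_add, Equiv.Perm.coe_one, id_eq] at hmain
  have := Fin.val_eq_of_eq hmain
  simp at this
  exact hlen (by simp [this])

end RFAux

/-- Finitely generated free groups are residually finite: any finite set of
nonidentity elements is simultaneously killed-free in some finite quotient. -/
theorem freeGroup_residually_finite (k : ℕ) (S : Finset (FreeGroup (Fin k)))
    (hS : (1 : FreeGroup (Fin k)) ∉ S) :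
    ∃ (K : Type) (_ : Group K) (_ : Finite K) (φ : FreeGroup (Fin k) →* K),
      ∀ s ∈ S, φ s ≠ 1 := by
  classical
  have H : ∀ s : {x // x ∈ S}, ∃ (K : Type) (_ : Group K) (_ : Finite K)
      (φ : FreeGroup (Fin k) →* K), φ s.1 ≠ 1 :=
    fun s => RFAux.single s.1 (fun h => hS (h ▸ s.2))
  choose K hG hF φ hφ using H
  letI : ∀ s, Group (K s) := hG
  letI : ∀ s, Finite (K s) := hF
  refine ⟨∀ s : {x // x ∈ S}, K s, inferInstance, inferInstance,
    { toFun := fun g s => φ s g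
      map_one' := by funext s; exact (φ s).map_one
      map_mul' := by intro g h; funext s; exact (φ s).map_mul g h }, ?_⟩
  intro s hs hcon
  exact hφ ⟨s, hs⟩ (congrFun hcon ⟨s, hs⟩)
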